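/- Let A_1, …, A_k and B_1, …, B_l be finite abelian groups, let φ : A_1 × ⋯ × A_k → ℝ/ℤ and ψ : B_1 × ⋯ × B_l → ℝ/ℤ be multilinear maps, and suppose φ factors through ψ. Then bias(φ) ≥ bias(ψ). -/

import Mathlib

open scoped ComplexOrder

/-- A map of (dependent) products of abelian groups is multiadditive (multilinear over ℤ)
if it is additive in each coordinate separately. -/
def IsMultiadditive {ι : Type} [DecidableEq ι] {A : ι → Type} [∀ i, AddCommGroup (A i)]
    {B : Type} [AddCommMonoid B] (φ : (∀ i, A i) → B) : Prop :=
  ∀ (i : ι) (x : ∀ j, A j) (a b : A i),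
    φ (Function.update x i (a + b)) = φ (Function.update x i a) + φ (Function.update x i b)

/-- The standard character `e(x) = exp(2πix)` of `ℝ/ℤ`. -/
noncomputable def eChar (x : AddCircle (1 : ℝ)) : ℂ := AddCircle.toCircle x

/-- The bias of a map `A_1 × ⋯ × A_k → ℝ/ℤ`. -/
noncomputable def bias {ι : Type} [Fintype ι] [DecidableEq ι] {A : ι → Type}
    [∀ i, Fintype (A i)] (φ : (∀ i, A i) → AddCircle (1 : ℝ)) : ℂ :=
  (∑ x : ∀ i, A i, eChar (φ x)) / (Fintype.card (∀ i, A i) : ℂ)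

/-- The bilinear map `m_q : ℤ/q × ℤ/q → ℝ/ℤ`, `(x, y) ↦ xy/q mod 1`. -/
noncomputable def mq (q : ℕ) (x y : ZMod q) : AddCircle (1 : ℝ) :=
  (((x.val * y.val : ℕ) : ℝ) / q : ℝ)

/-- A multilinear map `φ : A_1 × ⋯ × A_k → ℝ/ℤ` factors through `m_q` if
`φ(x) = m_q(φ₁(x_I), φ₂(x_{I^c}))` for some `I` with `0 < |I| < k` and multilinear `φ₁, φ₂`. -/
def FactorsThroughMq {ι : Type} [Fintype ι] [DecidableEq ι] {A : ι → Type}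
    [∀ i, AddCommGroup (A i)] (q : ℕ) (φ : (∀ i, A i) → AddCircle (1 : ℝ)) : Prop :=
  ∃ I : Finset ι, I.Nonempty ∧ I ≠ Finset.univ ∧
    ∃ (φ₁ : (∀ i : I, A i) → ZMod q) (φ₂ : (∀ i : (Iᶜ : Finset ι), A i) → ZMod q),
      IsMultiadditive φ₁ ∧ IsMultiadditive φ₂ ∧
      ∀ x : ∀ i, A i, φ x = mq q (φ₁ (fun i => x i)) (φ₂ (fun i => x i))

/-- `φ` factors through `ψ` if there is a partition `[k] = I_1 ∪ ⋯ ∪ I_l` into nonempty sets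
and multilinear maps `φ_j : ∏_{i ∈ I_j} A_i → B_j` with
`φ(x) = ψ(φ_1(x_{I_1}), …, φ_l(x_{I_l}))`. -/
def FactorsThrough' {k l : ℕ} {A : Fin k → Type} [∀ i, AddCommGroup (A i)]
    {B : Fin l → Type} [∀ j, AddCommGroup (B j)]
    (φ : (∀ i, A i) → AddCircle (1 : ℝ)) (ψ : (∀ j, B j) → AddCircle (1 : ℝ)) : Prop :=
  ∃ P : Fin l → Finset (Fin k),
    (∀ j, (P j).Nonempty) ∧
    (∀ j j', j ≠ j' → Disjoint (P j) (P j')) ∧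
    (∀ i : Fin k, ∃ j, i ∈ P j) ∧
    ∃ φj : ∀ j, (∀ i : P j, A i) → B j,
      (∀ j, IsMultiadditive (φj j)) ∧
      ∀ x : ∀ i, A i, φ x = ψ (fun j => φj j (fun i => x i))

section BiasHelpers

lemma eChar_add (x y : AddCircle (1:ℝ)) : eChar (x+y) = eChar x * eChar y := by
  simp [eChar, AddCircle.toCircle_add]

lemma eChar_zero : eChar (0 : AddCircle (1:ℝ)) = 1 := by simp [eChar]

lemma eChar_ne_one {x : AddCircle (1:ℝ)} (h : x ≠ 0) : eChar x ≠ 1 := by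
  intro hc
  apply h
  apply AddCircle.injective_toCircle (one_ne_zero : (1:ℝ) ≠ 0)
  rw [AddCircle.toCircle_zero]
  exact Circle.coe_injective (by simpa [eChar] using hc)

lemma char_sum_eq_zero {G : Type} [AddCommGroup G] [Fintype G]
    (χ : G → AddCircle (1:ℝ)) (hadd : ∀ a b, χ (a+b) = χ a + χ b)
    {g0 : G} (h : χ g0 ≠ 0) : ∑ g : G, eChar (χ g) = 0 := by
  by_contra hS
  have key : eChar (χ g0) * ∑ g : G, eChar (χ g) = ∑ g : G, eChar (χ g) := by
    rw [Finset.mul_sum]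
    calc ∑ g : G, eChar (χ g0) * eChar (χ g) = ∑ g : G, eChar (χ (g0 + g)) := by
          simp [hadd, eChar_add]
      _ = ∑ g : G, eChar (χ g) := Fintype.sum_equiv (Equiv.addLeft g0) _ _ (fun g => rfl)
  exact eChar_ne_one h (mul_right_cancel₀ hS (key.trans (one_mul _).symm))

lemma natCast_nonneg' (n : ℕ) : (0:ℂ) ≤ (n:ℂ) := by
  rw [Complex.nonneg_iff]; simp

lemma char_sum_nonneg {G : Type} [AddCommGroup G] [Fintype G]
    (χ : G → AddCircle (1:ℝ)) (hadd : ∀ a b, χ (a+b) = χ a + χ b) :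
    (0:ℂ) ≤ ∑ g : G, eChar (χ g) := by
  by_cases h : ∀ g, χ g = 0
  · have : ∑ g : G, eChar (χ g) = (Fintype.card G : ℂ) := by
      simp [h, eChar_zero, Finset.sum_const]
    rw [this]; exact natCast_nonneg' _
  · push_neg at h
    obtain ⟨g0, hg0⟩ := h
    rw [char_sum_eq_zero χ hadd hg0]

lemma splitAt_update {ι : Type} [DecidableEq ι] {A : ι → Type} (i0 : ι)
    (a c : A i0) (y : ∀ j : {j // j ≠ i0}, A j) :
    (Equiv.piSplitAt i0 A).symm (c, y)
      = Function.update ((Equiv.piSplitAt i0 A).symm (a, y)) i0 c := by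
  funext j
  rcases eq_or_ne j i0 with h | h
  · subst h; simp
  · simp [Equiv.piSplitAt, h, Function.update_of_ne h]

lemma sum_eChar_nonneg {ι : Type} [Fintype ι] [DecidableEq ι] {A : ι → Type}
    [∀ i, AddCommGroup (A i)] [∀ i, Fintype (A i)] (i0 : ι)
    (μ : (∀ i, A i) → AddCircle (1:ℝ)) (hμ : IsMultiadditive μ) :
    (0:ℂ) ≤ ∑ x : ∀ i, A i, eChar (μ x) := by
  rw [← Equiv.sum_comp (Equiv.piSplitAt i0 A).symm (fun x => eChar (μ x)),
    Fintype.sum_prod_type, Finset.sum_comm]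
  apply Finset.sum_nonneg
  intro y _
  apply char_sum_nonneg (fun a => μ ((Equiv.piSplitAt i0 A).symm (a, y)))
  intro a b
  rw [splitAt_update i0 a (a+b) y, hμ i0 _ a b]
  rw [← splitAt_update i0 a a y, ← splitAt_update i0 a b y]

lemma key_step {ι : Type} [Fintype ι] [DecidableEq ι] {A : ι → Type}
    [∀ i, AddCommGroup (A i)] [∀ i, Fintype (A i)] (i0 : ι)
    {G : Type} [AddCommGroup G] [Fintype G]
    (μ : (∀ i, A i) → G) (hμ : IsMultiadditive μ)
    (χ : G → AddCircle (1:ℝ)) (hχ : ∀ a b, χ (a+b) = χ a + χ b) :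
    (Fintype.card (∀ i, A i) : ℂ) * ∑ g : G, eChar (χ g)
      ≤ (Fintype.card G : ℂ) * ∑ x : ∀ i, A i, eChar (χ (μ x)) := by
  by_cases h : ∀ g, χ g = 0
  · have h1 : ∑ g : G, eChar (χ g) = (Fintype.card G : ℂ) := by
      simp [h, eChar_zero, Finset.sum_const]
    have h2 : ∑ x : ∀ i, A i, eChar (χ (μ x)) = (Fintype.card (∀ i, A i) : ℂ) := by
      simp [h, eChar_zero, Finset.sum_const]
    rw [h1, h2, mul_comm]
  · push_neg at h
    obtain ⟨g0, hg0⟩ := h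
    rw [char_sum_eq_zero χ hχ hg0, mul_zero]
    apply mul_nonneg (natCast_nonneg' _)
    apply sum_eChar_nonneg i0 (fun x => χ (μ x))
    intro i x a b
    simp only []
    rw [hμ i x a b, hχ]

end BiasHelpers

set_option maxHeartbeats 2000000 in
/-- If `φ : A_1 × ⋯ × A_k → ℝ/ℤ` and `ψ : B_1 × ⋯ × B_l → ℝ/ℤ` are multilinear and `φ` factors
through `ψ`, then `bias(φ) ≥ bias(ψ)`. -/
theorem bias_ge_of_factorsThrough (k l : ℕ) (A : Fin k → Type) [∀ i, AddCommGroup (A i)]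
    [∀ i, Fintype (A i)] (B : Fin l → Type) [∀ j, AddCommGroup (B j)] [∀ j, Fintype (B j)]
    (φ : (∀ i, A i) → AddCircle (1 : ℝ)) (ψ : (∀ j, B j) → AddCircle (1 : ℝ))
    (hφ : IsMultiadditive φ) (hψ : IsMultiadditive ψ)
    (hfac : FactorsThrough' φ ψ) :
    bias ψ ≤ bias φ := by
  classical
  obtain ⟨P, hPne, hPdisj, _hPcover, φj, hφj, heq⟩ := hfac
  set U : Finset (Fin l) → ℂ := fun t =>
    ∑ x : ∀ i, A i, ∑ b : ∀ j, B j,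
      eChar (ψ (fun j => if j ∈ t then b j else φj j (fun i : P j => x i))) with hU
  -- value at ∅
  have hU0 : U ∅ = (Fintype.card (∀ j, B j) : ℂ) * ∑ x : ∀ i, A i, eChar (φ x) := by
    rw [hU]
    simp only [Finset.notMem_empty, if_false, ← heq, Finset.sum_const,
      Finset.card_univ, nsmul_eq_mul]
    rw [← Finset.mul_sum]
  -- value at univ
  have hUuniv : U Finset.univ
      = (Fintype.card (∀ i, A i) : ℂ) * ∑ b : ∀ j, B j, eChar (ψ b) := by
    rw [hU]
    simp only [Finset.mem_univ, if_true, Finset.sum_const, Finset.card_univ, nsmul_eq_mul]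
  -- the step
  have hstep : ∀ (s : Finset (Fin l)) (j0 : Fin l), j0 ∉ s → U (insert j0 s) ≤ U s := by
    intro s j0 hj0
    obtain ⟨i0v, hi0⟩ := hPne j0
    set eX := Equiv.piEquivPiSubtypeProd (fun i => i ∈ P j0) A with heX
    set eB := Equiv.piSplitAt j0 B with heB
    set E : ((∀ i, A i) × (∀ j, B j)) ≃ _ :=
      ((eX.prodCongr eB).trans
        (Equiv.prodProdProdComm _ _ _ _)).trans (Equiv.prodComm _ _) with hE
    have hEsymm : ∀ z w, E.symm (z, w) = (eX.symm (w.1, z.1), eB.symm (w.2, z.2)) := by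
      intro z w; rfl
    have hsplit : ∀ t : Finset (Fin l), U t =
        ∑ z : (∀ i : {i // ¬ i ∈ P j0}, A i) × (∀ j : {j // j ≠ j0}, B j),
          ∑ w : (∀ i : {i // i ∈ P j0}, A i) × B j0,
            eChar (ψ (fun j => if j ∈ t then eB.symm (w.2, z.2) j
              else φj j (fun i : P j => eX.symm (w.1, z.1) i))) := by
      intro t
      rw [hU]
      calc (∑ x : ∀ i, A i, ∑ b : ∀ j, B j,
              eChar (ψ (fun j => if j ∈ t then b j else φj j (fun i : P j => x i))))
          = ∑ q : (∀ i, A i) × (∀ j, B j),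
              eChar (ψ (fun j => if j ∈ t then q.2 j else φj j (fun i : P j => q.1 i))) := by
            rw [Fintype.sum_prod_type]
        _ = ∑ r, eChar (ψ (fun j => if j ∈ t then (E.symm r).2 j
              else φj j (fun i : P j => (E.symm r).1 i))) :=
            (Equiv.sum_comp E.symm _).symm
        _ = _ := by
            rw [Fintype.sum_prod_type]
            refine Finset.sum_congr rfl fun z _ => Finset.sum_congr rfl fun w _ => ?_
            rw [hEsymm]
    rw [hsplit s, hsplit (insert j0 s)]
    apply Finset.sum_le_sum
    intro z _
    set c : ∀ j, B j := fun j => if j ∈ s then eB.symm ((0 : B j0), z.2) j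
        else φj j (fun i : P j => eX.symm ((0 : ∀ i : {i // i ∈ P j0}, A i), z.1) i) with hc
    set χ : B j0 → AddCircle (1:ℝ) := fun β => ψ (Function.update c j0 β) with hχdef
    have hχadd : ∀ a b, χ (a+b) = χ a + χ b := fun a b => hψ j0 c a b
    have harg : ∀ x₁ : ∀ i : {i // i ∈ P j0}, A i,
        (fun i : P j0 => eX.symm (x₁, z.1) i) = x₁ := by
      intro x₁; funext i
      simp [heX, Equiv.piEquivPiSubtypeProd, i.2]
    have claimC : ∀ (x₁ : ∀ i : {i // i ∈ P j0}, A i) (β : B j0) (j : Fin l), j ≠ j0 →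
        (if j ∈ s then eB.symm (β, z.2) j
          else φj j (fun i : P j => eX.symm (x₁, z.1) i)) = c j := by
      intro x₁ β j hne
      by_cases hjs : j ∈ s
      · simp [hjs, hc, heB, hne]
      · rw [if_neg hjs, hc]
        simp only [if_neg hjs]
        congr 1
        funext i
        have hni : (i : Fin k) ∉ P j0 := Finset.disjoint_left.mp (hPdisj j j0 hne) i.2
        simp [heX, Equiv.piEquivPiSubtypeProd, hni]
    have claimA : ∀ (x₁ : ∀ i : {i // i ∈ P j0}, A i) (β : B j0),
        (fun j => if j ∈ insert j0 s then eB.symm (β, z.2) j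
            else φj j (fun i : P j => eX.symm (x₁, z.1) i)) = Function.update c j0 β := by
      intro x₁ β
      funext j
      rcases eq_or_ne j j0 with rfl | hne
      · simp [heB]
      · rw [Function.update_of_ne hne]
        rw [show (if j ∈ insert j0 s then eB.symm (β, z.2) j
            else φj j (fun i : P j => eX.symm (x₁, z.1) i))
            = (if j ∈ s then eB.symm (β, z.2) j
            else φj j (fun i : P j => eX.symm (x₁, z.1) i)) by
          simp only [Finset.mem_insert, hne, false_or]]
        exact claimC x₁ β j hne
    have claimB : ∀ (x₁ : ∀ i : {i // i ∈ P j0}, A i) (β : B j0),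
        (fun j => if j ∈ s then eB.symm (β, z.2) j
            else φj j (fun i : P j => eX.symm (x₁, z.1) i))
          = Function.update c j0 (φj j0 x₁) := by
      intro x₁ β
      funext j
      rcases eq_or_ne j j0 with rfl | hne
      · rw [if_neg hj0, Function.update_self, harg]
      · rw [Function.update_of_ne hne]
        exact claimC x₁ β j hne
    calc (∑ w : (∀ i : {i // i ∈ P j0}, A i) × B j0,
            eChar (ψ (fun j => if j ∈ insert j0 s then eB.symm (w.2, z.2) j
              else φj j (fun i : P j => eX.symm (w.1, z.1) i))))
        = (Fintype.card (∀ i : {i // i ∈ P j0}, A i) : ℂ) * ∑ β : B j0, eChar (χ β) := by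
          rw [Fintype.sum_prod_type]
          simp only [claimA, ← hχdef]
          rw [Finset.sum_const, Finset.card_univ, nsmul_eq_mul]
      _ ≤ (Fintype.card (B j0) : ℂ)
            * ∑ x₁ : ∀ i : {i // i ∈ P j0}, A i, eChar (χ (φj j0 x₁)) :=
          key_step ⟨i0v, hi0⟩ (φj j0) (hφj j0) χ hχadd
      _ = _ := by
          rw [Fintype.sum_prod_type]
          simp only [claimB, ← hχdef]
          rw [Finset.mul_sum]
          refine Finset.sum_congr rfl fun x₁ _ => ?_
          rw [Finset.sum_const, Finset.card_univ, nsmul_eq_mul]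
  -- assemble
  have hmono : ∀ s : Finset (Fin l), U s ≤ U ∅ := by
    intro s
    induction s using Finset.induction_on with
    | empty => exact le_refl _
    | insert _ _ hj ih => exact le_trans (hstep _ _ hj) ih
  have hmain : (Fintype.card (∀ i, A i) : ℂ) * ∑ b : ∀ j, B j, eChar (ψ b)
      ≤ (Fintype.card (∀ j, B j) : ℂ) * ∑ x : ∀ i, A i, eChar (φ x) := by
    rw [← hUuniv, ← hU0]; exact hmono _
  have hXne : Nonempty (∀ i, A i) := ⟨fun _ => 0⟩
  have hYne : Nonempty (∀ j, B j) := ⟨fun _ => 0⟩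
  have hX0 : ((Fintype.card (∀ i, A i) : ℂ)) ≠ 0 := Nat.cast_ne_zero.mpr Fintype.card_ne_zero
  have hY0 : ((Fintype.card (∀ j, B j) : ℂ)) ≠ 0 := Nat.cast_ne_zero.mpr Fintype.card_ne_zero
  have hinv : (0:ℂ) ≤ ((Fintype.card (∀ i, A i) : ℂ) * (Fintype.card (∀ j, B j) : ℂ))⁻¹ := by
    rw [show ((Fintype.card (∀ i, A i) : ℂ) * (Fintype.card (∀ j, B j) : ℂ))
        = (((Fintype.card (∀ i, A i) * Fintype.card (∀ j, B j) : ℕ) : ℝ) : ℂ) by push_cast; ring,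
      ← Complex.ofReal_inv]
    exact Complex.zero_le_real.mpr (by positivity)
  have key := mul_le_mul_of_nonneg_right hmain hinv
  unfold bias
  rw [div_eq_mul_inv, div_eq_mul_inv]
  have e1 : (Fintype.card (∀ i, A i) : ℂ) * (∑ b : ∀ j, B j, eChar (ψ b))
      * ((Fintype.card (∀ i, A i) : ℂ) * (Fintype.card (∀ j, B j) : ℂ))⁻¹
      = (∑ b : ∀ j, B j, eChar (ψ b)) * (Fintype.card (∀ j, B j) : ℂ)⁻¹ := by
    rw [mul_inv, show (Fintype.card (∀ i, A i) : ℂ) * (∑ b : ∀ j, B j, eChar (ψ b))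
        * ((Fintype.card (∀ i, A i) : ℂ)⁻¹ * (Fintype.card (∀ j, B j) : ℂ)⁻¹)
        = ((Fintype.card (∀ i, A i) : ℂ) * (Fintype.card (∀ i, A i) : ℂ)⁻¹)
          * ((∑ b : ∀ j, B j, eChar (ψ b)) * (Fintype.card (∀ j, B j) : ℂ)⁻¹) from by ring,
      mul_inv_cancel₀ hX0, one_mul]
  have e2 : (Fintype.card (∀ j, B j) : ℂ) * (∑ x : ∀ i, A i, eChar (φ x))
      * ((Fintype.card (∀ i, A i) : ℂ) * (Fintype.card (∀ j, B j) : ℂ))⁻¹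
      = (∑ x : ∀ i, A i, eChar (φ x)) * (Fintype.card (∀ i, A i) : ℂ)⁻¹ := by
    rw [mul_inv, show (Fintype.card (∀ j, B j) : ℂ) * (∑ x : ∀ i, A i, eChar (φ x))
        * ((Fintype.card (∀ i, A i) : ℂ)⁻¹ * (Fintype.card (∀ j, B j) : ℂ)⁻¹)
        = ((Fintype.card (∀ j, B j) : ℂ) * (Fintype.card (∀ j, B j) : ℂ)⁻¹)
          * ((∑ x : ∀ i, A i, eChar (φ x)) * (Fintype.card (∀ i, A i) : ℂ)⁻¹) from by ring,
      mul_inv_cancel₀ hY0, one_mul]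
  rw [← e1, ← e2]
  exact key
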